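/- Let G be a finite group that is a Frobenius group with abelian Frobenius kernel N of order n and abelian Frobenius complement H of order m. Then every nontrivial conjugacy class of G has size n or m; consequently cs(G) \ {1} ⊆ {n, m}. -/

import Mathlib

/-- Let `G` be a finite Frobenius group with Frobenius complement `H` (a proper nontrivial
subgroup with `H ∩ gHg⁻¹ = 1` for `g ∉ H`) and abelian Frobenius kernel `N` (a normal
subgroup with `G = N ⋊ H` and `gcd(|N|,|H|) = 1`), with `H` also abelian.  Then every
nontrivial conjugacy class of `G` has size `|N| = n` or `|H| = m`. -/
theorem stmt6 (G : Type) [Group G] [Finite G] (H N : Subgroup G)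
    (hHbot : H ≠ ⊥) (hHtop : H ≠ ⊤)
    (hmal : ∀ g : G, g ∉ H → H ⊓ Subgroup.map (MulAut.conj g).toMonoidHom H = ⊥)
    (hNnormal : N.Normal)
    (hsup : N ⊔ H = ⊤) (hinf : N ⊓ H = ⊥)
    (hcoprime : Nat.Coprime (Nat.card N) (Nat.card H))
    (hNab : IsMulCommutative N) (hHab : IsMulCommutative H) :
    ∀ a : G, a ≠ 1 →
      Nat.card {b : G // IsConj a b} = Nat.card N ∨
      Nat.card {b : G // IsConj a b} = Nat.card H := by
  classical
  open scoped Pointwise in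
  have hmulset : ((N : Set G) * (H : Set G)) = Set.univ := by
    rw [← Subgroup.normal_mul, hsup, Subgroup.coe_top]
  have hcompl : Subgroup.IsComplement' N H :=
    Subgroup.isComplement'_of_disjoint_and_mul_eq_univ (disjoint_iff.mpr hinf) hmulset
  have cardG : Nat.card N * Nat.card H = Nat.card G := hcompl.card_mul
  -- Malnormality: anything commuting with a nontrivial element of H lies in H.
  have lemA : ∀ x ∈ H, x ≠ 1 → ∀ c : G, x * c = c * x → c ∈ H := by
    intro x hx hx1 c hc
    by_contra hcH
    have h1 : x ∈ H ⊓ Subgroup.map (MulAut.conj c).toMonoidHom H := by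
      refine ⟨hx, ⟨x, hx, ?_⟩⟩
      show c * x * c⁻¹ = x
      rw [mul_inv_eq_iff_eq_mul]
      exact hc.symm
    rw [hmal c hcH] at h1
    exact hx1 h1
  -- Every element outside N is conjugate into H.
  have lemC : ∀ g : G, g ∉ N → ∃ y : G, y * g * y⁻¹ ∈ H := by
    intro g hg
    have hgmem : g ∈ ((N : Set G) * (H : Set G)) := by rw [hmulset]; exact Set.mem_univ g
    obtain ⟨n, hn, h, hh, rfl⟩ := hgmem
    have hh1 : h ≠ 1 := by rintro rfl; exact hg (by simpa using hn)
    set f : N → N := fun x =>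
      ⟨(x : G) * (h * (x : G)⁻¹ * h⁻¹),
        N.mul_mem x.2 (hNnormal.conj_mem _ (N.inv_mem x.2) h)⟩ with hf
    have finj : Function.Injective f := by
      intro x y hxy
      have e : (x : G) * (h * (x : G)⁻¹ * h⁻¹) = (y : G) * (h * (y : G)⁻¹ * h⁻¹) :=
        congrArg Subtype.val hxy
      have comm : h * ((y : G)⁻¹ * x) = ((y : G)⁻¹ * x) * h := by
        have e2 := congrArg (fun t => (y : G)⁻¹ * t * (h * (x : G) * h⁻¹)) e
        beta_reduce at e2
        group at e2
        group
        rw [e2]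
        group
      have hmemH : (y : G)⁻¹ * x ∈ H := lemA h hh hh1 _ comm
      have hmemN : (y : G)⁻¹ * x ∈ N := N.mul_mem (N.inv_mem y.2) x.2
      have hone : (y : G)⁻¹ * (x : G) = 1 := by
        have := Subgroup.mem_inf.mpr ⟨hmemN, hmemH⟩
        rw [hinf] at this
        exact this
      exact Subtype.ext ((inv_mul_eq_one.mp hone).symm)
    have fsurj : Function.Surjective f := Finite.surjective_of_injective finj
    obtain ⟨x, hx⟩ := fsurj ⟨n⁻¹, N.inv_mem hn⟩
    have hx' : (x : G) * (h * (x : G)⁻¹ * h⁻¹) = n⁻¹ := congrArg Subtype.val hx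
    refine ⟨x, ?_⟩
    have hcomm : n * (x : G) = (x : G) * n :=
      Subgroup.mul_comm_of_mem_isMulCommutative N hn x.2
    have key : (x : G) * (n * h) * (x : G)⁻¹ = h := by
      have e : (x : G) * (n * h) * (x : G)⁻¹
          = n * ((x : G) * (h * (x : G)⁻¹ * h⁻¹)) * h := by
        rw [show n * ((x : G) * (h * (x : G)⁻¹ * h⁻¹))
            = (n * (x : G)) * (h * (x : G)⁻¹ * h⁻¹) from (mul_assoc _ _ _).symm, hcomm]
        group
      rw [e, hx']
      group
    show (x : G) * (n * h) * (x : G)⁻¹ ∈ H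
    rw [key]
    exact hh
  -- Centralizer of a nontrivial element of N is N.
  have centN : ∀ b : G, b ∈ N → b ≠ 1 → Subgroup.centralizer {b} = N := by
    intro b hb hb1
    apply le_antisymm
    · intro c hc
      have hcomm : b * c = c * b := (Subgroup.mem_centralizer_iff.mp hc) b rfl
      by_contra hcN
      obtain ⟨y, hy⟩ := lemC c hcN
      have hy1 : y * c * y⁻¹ ≠ 1 := by
        intro h0
        apply hcN
        have : c = 1 := by
          have h0' : y * c = y := mul_inv_eq_one.mp h0
          exact (mul_eq_left (a := y)).mp h0'
        rw [this]; exact N.one_mem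
      have hcomm2 : (y * c * y⁻¹) * (y * b * y⁻¹) = (y * b * y⁻¹) * (y * c * y⁻¹) := by
        have l1 : (y * c * y⁻¹) * (y * b * y⁻¹) = y * (c * b) * y⁻¹ := by group
        have l2 : (y * b * y⁻¹) * (y * c * y⁻¹) = y * (b * c) * y⁻¹ := by group
        rw [l1, l2, hcomm]
      have hH : y * b * y⁻¹ ∈ H := lemA _ hy hy1 _ hcomm2
      have hNc : y * b * y⁻¹ ∈ N := hNnormal.conj_mem b hb y
      have hone : y * b * y⁻¹ = 1 := by
        have := Subgroup.mem_inf.mpr ⟨hNc, hH⟩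
        rw [hinf] at this
        exact this
      apply hb1
      have h0' : y * b = y := mul_inv_eq_one.mp hone
      exact (mul_eq_left (a := y)).mp h0'
    · intro c hcN
      rw [Subgroup.mem_centralizer_iff]
      intro z hz
      rw [Set.mem_singleton_iff] at hz
      subst hz
      exact Subgroup.mul_comm_of_mem_isMulCommutative N hb hcN
  -- Centralizer of a nontrivial element of H is H.
  have centH : ∀ b : G, b ∈ H → b ≠ 1 → Subgroup.centralizer {b} = H := by
    intro b hb hb1
    apply le_antisymm
    · intro c hc
      exact lemA b hb hb1 c ((Subgroup.mem_centralizer_iff.mp hc) b rfl)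
    · intro c hcH
      rw [Subgroup.mem_centralizer_iff]
      intro z hz
      rw [Set.mem_singleton_iff] at hz
      subst hz
      exact Subgroup.mul_comm_of_mem_isMulCommutative H hb hcH
  -- Class size times centralizer size equals |G|.
  have classCard : ∀ b : G,
      Nat.card {c : G // IsConj b c} * Nat.card (Subgroup.centralizer {b}) = Nat.card G := by
    intro b
    haveI : Fintype G := Fintype.ofFinite G
    haveI : Fintype (MulAction.orbit (ConjAct G) b) := Fintype.ofFinite _
    haveI : Fintype (MulAction.stabilizer (ConjAct G) b) := Fintype.ofFinite _
    have e1 : Nat.card {c : G // IsConj b c} = Nat.card (MulAction.orbit (ConjAct G) b) :=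
      Nat.card_congr (Equiv.subtypeEquivRight (fun c => by
        rw [ConjAct.mem_orbit_conjAct, isConj_comm]))
    rw [e1, Subgroup.nat_card_centralizer_nat_card_stabilizer,
      Nat.card_eq_fintype_card, Nat.card_eq_fintype_card, Nat.card_eq_fintype_card,
      MulAction.card_orbit_mul_card_stabilizer_eq_card_group (ConjAct G) b]
    exact Fintype.card_congr ConjAct.ofConjAct.toEquiv
  have cardNpos : 0 < Nat.card N := Nat.card_pos
  have cardHpos : 0 < Nat.card H := Nat.card_pos
  intro a ha
  by_cases haN : a ∈ N
  · right
    have hc := classCard a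
    rw [centN a haN ha] at hc
    have : Nat.card {b : G // IsConj a b} * Nat.card N = Nat.card H * Nat.card N := by
      rw [hc, ← cardG]; ring
    exact Nat.eq_of_mul_eq_mul_right cardNpos this
  · left
    obtain ⟨y, hy⟩ := lemC a haN
    have hy1 : y * a * y⁻¹ ≠ 1 := by
      intro h0
      apply ha
      have h0' : y * a = y := mul_inv_eq_one.mp h0
      exact (mul_eq_left (a := y)).mp h0'
    have hconj : IsConj a (y * a * y⁻¹) := isConj_iff.mpr ⟨y, rfl⟩
    have e : Nat.card {b : G // IsConj a b} = Nat.card {b : G // IsConj (y * a * y⁻¹) b} :=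
      Nat.card_congr (Equiv.subtypeEquivRight (fun c =>
        ⟨fun h' => hconj.symm.trans h', fun h' => hconj.trans h'⟩))
    rw [e]
    have hc := classCard (y * a * y⁻¹)
    rw [centH _ hy hy1] at hc
    have : Nat.card {b : G // IsConj (y * a * y⁻¹) b} * Nat.card H
        = Nat.card N * Nat.card H := by rw [hc, ← cardG]
    exact Nat.eq_of_mul_eq_mul_right cardHpos this
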